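/- Let β : V × V' → W be a bilinear map between finite-dimensional real vector spaces, and let y ∈ V' be such that the linear map β_y : V → W, x ↦ β(x,y), has maximal rank among all β_z with z ∈ V'. Then for every z ∈ V', β_z(ker β_y) ⊆ Im β_y. -/

import Mathlib

/-- Moore's lemma: if `β_y` has maximal rank among the maps `β_z`, then for every `z`,
`β_z` maps the kernel of `β_y` into the image of `β_y`. -/
theorem stmt_0 {V V' W : Type*} [AddCommGroup V] [Module ℝ V] [FiniteDimensional ℝ V]
    [AddCommGroup V'] [Module ℝ V'] [FiniteDimensional ℝ V']
    [AddCommGroup W] [Module ℝ W] [FiniteDimensional ℝ W]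
    (β : V →ₗ[ℝ] V' →ₗ[ℝ] W) (y : V')
    (hmax : ∀ z : V', Module.finrank ℝ (LinearMap.range (β.flip z)) ≤
      Module.finrank ℝ (LinearMap.range (β.flip y))) :
    ∀ z : V', ∀ x ∈ LinearMap.ker (β.flip y), β.flip z x ∈ LinearMap.range (β.flip y) := by
  classical
  intro z x hx
  by_contra hmem
  set T := β.flip y with hT
  set r := Module.finrank ℝ (LinearMap.range T) with hr
  have hx0 : β x y = 0 := by
    simpa [T, LinearMap.flip_apply] using (LinearMap.mem_ker.mp hx)
  -- basis of the range of T
  let b : Module.Basis (Fin r) ℝ (LinearMap.range T) := Module.finBasis ℝ (LinearMap.range T)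
  -- preimages
  have hv : ∀ i : Fin r, ∃ v : V, T v = (b i : W) := fun i => (b i).2
  let v : Fin r → V := fun i => (hv i).choose
  have hvT : ∀ i, T (v i) = (b i : W) := fun i => (hv i).choose_spec
  -- coordinates
  let e : W ≃ₗ[ℝ] (Fin (Module.finrank ℝ W) → ℝ) := (Module.finBasis ℝ W).equivFun
  -- the perturbed family
  let G : ℝ → Fin (r + 1) → (Fin (Module.finrank ℝ W) → ℝ) := fun t =>
    Fin.snoc (fun i => e ((b i : W) + t • β.flip z (v i))) (e (β.flip z x))
  have hGcont : Continuous G := by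
    apply continuous_pi
    intro i
    refine Fin.lastCases ?_ ?_ i
    · simpa [G] using continuous_const
    · intro i
      have : (fun t => G t i.castSucc) =
          fun t => e (b i : W) + t • e (β.flip z (v i)) := by
        funext t
        simp [G, map_add, map_smul]
      rw [this]
      exact continuous_const.add (continuous_id.smul continuous_const)
  -- linear independence of the base family
  have hbi : LinearIndependent ℝ (fun i => e ((b i : W))) := by
    have hker : LinearMap.ker (e.toLinearMap ∘ₗ (LinearMap.range T).subtype) = ⊥ := by
      rw [LinearMap.ker_comp, LinearEquiv.ker, Submodule.comap_bot,
        Submodule.ker_subtype]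
    exact b.linearIndependent.map' (e.toLinearMap ∘ₗ (LinearMap.range T).subtype) hker
  have hspan : Submodule.span ℝ (Set.range fun i => e ((b i : W))) =
      Submodule.map (e : W →ₗ[ℝ] _) (LinearMap.range T) := by
    have h1 : (Set.range fun i => e ((b i : W))) =
        (e : W →ₗ[ℝ] _) '' (Set.range fun i => ((b i : W))) := by
      rw [← Set.range_comp]; rfl
    rw [h1, Submodule.span_image]
    congr 1
    have h2 : (Set.range fun i => ((b i : W))) =
        (LinearMap.range T).subtype '' (Set.range b) := by
      rw [← Set.range_comp]; rfl
    rw [h2, Submodule.span_image, b.span_eq, Submodule.map_top,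
      Submodule.range_subtype]
  have hG0 : LinearIndependent ℝ (G 0) := by
    have : G 0 = Fin.snoc (fun i => e ((b i : W))) (e (β.flip z x)) := by
      funext i
      refine Fin.lastCases ?_ ?_ i <;> simp [G]
    rw [this, linearIndependent_fin_snoc]
    refine ⟨hbi, ?_⟩
    rw [hspan]
    intro hc
    rcases hc with ⟨w, hw, hew⟩
    exact hmem (by rwa [e.injective hew] at hw)
  -- for small t ≠ 0 the perturbed family is independent
  have hopen : ∀ᶠ t in nhds (0 : ℝ), LinearIndependent ℝ (G t) :=
    hGcont.continuousAt.eventually_mem (isOpen_setOf_linearIndependent.mem_nhds hG0)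
  obtain ⟨t, hGt, ht0⟩ :=
    ((hopen.filter_mono nhdsWithin_le_nhds).and self_mem_nhdsWithin).exists
      (f := nhdsWithin (0 : ℝ) {0}ᶜ)
  -- transfer back to W
  set M := LinearMap.range (β.flip (y + t • z)) with hM
  have hFmem : ∀ i : Fin (r + 1), e.symm (G t i) ∈ M := by
    intro i
    refine Fin.lastCases ?_ ?_ i
    · refine ⟨t⁻¹ • x, ?_⟩
      have : G t (Fin.last r) = e (β.flip z x) := by simp [G]
      rw [this, LinearEquiv.symm_apply_apply]
      simp [LinearMap.flip_apply, map_add, map_smul, hx0, smul_smul,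
        inv_mul_cancel₀ ht0]
    · intro i
      refine ⟨v i, ?_⟩
      have : G t i.castSucc = e ((b i : W) + t • β.flip z (v i)) := by simp [G]
      rw [this, LinearEquiv.symm_apply_apply, ← hvT i]
      simp [T, LinearMap.flip_apply, map_add, map_smul]
  let F : Fin (r + 1) → M := fun i => ⟨e.symm (G t i), hFmem i⟩
  have hFind : LinearIndependent ℝ F := by
    have h1 : LinearIndependent ℝ (⇑e.symm.toLinearMap ∘ G t) :=
      hGt.map' e.symm.toLinearMap
        (LinearMap.ker_eq_bot_of_injective e.symm.injective)
    have h2 : ⇑M.subtype ∘ F = ⇑e.symm.toLinearMap ∘ G t := rfl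
    exact LinearIndependent.of_comp M.subtype (h2 ▸ h1)
  have hcard : r + 1 ≤ Module.finrank ℝ M :=
    hFind.fintype_card_le_finrank.trans_eq' (by simp)
  have hle := hmax (y + t • z)
  rw [← hM] at hle
  omega
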